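/- arXiv:2508.07931 — 3 statements merged into one kernel-verified Lean document; each statement's English description precedes it below -/
import Mathlib

section
/- Let κ : ℝ_{>0} → ℝ be continuous with inf_{r>0} r·κ(r) > −∞ and liminf_{r→+∞} κ(r) ≥ α for some α > 0. Then for every ε ∈ (0, α) there exists a C² function f : ℝ_{>0} → ℝ such that for all r > 0: f''(r) ≥ ½ f(r) f'(r) − (r/2) κ(r), limsup_{r↓0} f(r) ≤ 0, and liminf_{r→+∞} r^{-1} f(r) ≥ √(α − ε). Moreover f can be chosen so that for all sufficiently large r, f(r) = √(α − ε)·(r − r⁺) for some r⁺ > 0 (in particular f is eventually linear with slope √(α − ε)). -/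
open Real Set Filter
open Topology

/-- given a continuous lower convexity bound `κ` with `inf_{r>0} r κ(r) > -∞`
and `liminf_{r→∞} κ(r) ≥ α > 0`, for every `ε ∈ (0,α)` there is a `C²` invariant profile `f`
with `f'' ≥ ½ f f' - (r/2)κ(r)`, `limsup_{r↓0} f ≤ 0`, `liminf_{r→∞} r⁻¹f(r) ≥ √(α-ε)`, and
`f` eventually linear with slope `√(α-ε)`. -/
theorem stmt9 (κ : ℝ → ℝ) (hκcont : ContinuousOn κ (Set.Ioi 0))
    (hbdd : ∃ m : ℝ, ∀ r : ℝ, 0 < r → m ≤ r * κ r)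
    (α : ℝ) (hα : 0 < α)
    (hliminf : α ≤ Filter.liminf κ Filter.atTop) :
    ∀ ε ∈ Set.Ioo (0 : ℝ) α, ∃ f : ℝ → ℝ,
      ContDiffOn ℝ 2 f (Set.Ioi 0) ∧
      (∀ r : ℝ, 0 < r →
        deriv (deriv f) r ≥ (1 / 2) * (f r * deriv f r) - r / 2 * κ r) ∧
      Filter.limsup f (nhdsWithin 0 (Set.Ioi 0)) ≤ 0 ∧
      Real.sqrt (α - ε) ≤ Filter.liminf (fun r => f r / r) Filter.atTop ∧
      ∃ rp : ℝ, 0 < rp ∧ ∃ R : ℝ, ∀ r : ℝ, R ≤ r → f r = Real.sqrt (α - ε) * (r - rp) := by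
  obtain ⟨m, hm⟩ := hbdd
  rintro ε ⟨hε0, hεα⟩
  set s : ℝ := Real.sqrt (α - ε) with hs
  have hαε : (0:ℝ) < α - ε := by linarith
  have hs0 : 0 < s := Real.sqrt_pos.mpr hαε
  have hs2 : s ^ 2 = α - ε := Real.sq_sqrt hαε.le
  -- κ is eventually bounded below
  have hbd : ∀ᶠ r in atTop, min m 0 ≤ κ r := by
    filter_upwards [eventually_ge_atTop (1:ℝ)] with r hr
    have h1 := hm r (by linarith)
    rcases le_or_gt 0 (κ r) with h | h
    · exact le_trans (min_le_right _ _) h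
    · have : r * κ r ≤ 1 * κ r := by
        apply mul_le_mul_of_nonpos_right hr h.le
      have : m ≤ κ r := by linarith
      exact le_trans (min_le_left _ _) this
  have hcb : Filter.IsBoundedUnder (· ≥ ·) atTop κ :=
    ⟨min m 0, by simpa [Filter.eventually_map] using hbd⟩
  -- eventually κ r > α - ε/2
  have h2 : ∀ᶠ r in atTop, α - ε / 2 < κ r :=
    Filter.eventually_lt_of_lt_liminf (lt_of_lt_of_le (by linarith) hliminf) hcb
  obtain ⟨R₀, hR₀⟩ := Filter.eventually_atTop.mp h2
  -- choose the shift rp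
  set rp : ℝ := max 1 ((s ^ 2 * R₀ - m) / s ^ 2) with hrp
  have hrp0 : 0 < rp := lt_of_lt_of_le one_pos (le_max_left _ _)
  have hkey : s ^ 2 * R₀ - m ≤ s ^ 2 * rp := by
    have h1 : (s ^ 2 * R₀ - m) / s ^ 2 ≤ rp := le_max_right _ _
    have := mul_le_mul_of_nonneg_left h1 (le_of_lt (by positivity : (0:ℝ) < s ^ 2))
    rwa [mul_div_cancel₀ _ (by positivity : s ^ 2 ≠ 0)] at this
  refine ⟨fun r => s * (r - rp), ?_, ?_, ?_, ?_, rp, hrp0, 0, fun r _ => rfl⟩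
  · exact (contDiff_const.mul (contDiff_id.sub contDiff_const)).contDiffOn
  · intro r hr
    have hd1 : deriv (fun r => s * (r - rp)) = fun _ => s := by
      funext x
      exact (((hasDerivAt_id x).sub_const rp).const_mul s).deriv.trans (by ring)
    rw [hd1]
    simp only [deriv_const]
    have hmr := hm r hr
    rcases le_or_gt r R₀ with hcase | hcase
    · -- small r: use uniform bound
      have h3 : s ^ 2 * r ≤ s ^ 2 * R₀ := by nlinarith [sq_nonneg s]
      nlinarith [sq_nonneg s]
    · -- large r
      have h4 : α - ε / 2 < κ r := hR₀ r hcase.le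
      nlinarith [mul_nonneg hr.le (by linarith : (0:ℝ) ≤ ε / 2),
        mul_nonneg (by positivity : (0:ℝ) ≤ s ^ 2) hrp0.le,
        mul_lt_mul_of_pos_left h4 hr]
  · -- limsup at 0⁺
    have ht : Tendsto (fun r => s * (r - rp)) (nhdsWithin 0 (Set.Ioi 0)) (𝓝 (s * (0 - rp))) :=
      ((continuous_const.mul (continuous_id.sub continuous_const)).tendsto 0).mono_left
        nhdsWithin_le_nhds
    rw [ht.limsup_eq]
    nlinarith
  · -- liminf at ∞
    have ht : Tendsto (fun r => s * (r - rp) / r) atTop (𝓝 s) := by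
      have h0 : Tendsto (fun r : ℝ => s - s * rp / r) atTop (𝓝 (s - 0)) :=
        tendsto_const_nhds.sub (Tendsto.div_atTop tendsto_const_nhds tendsto_id)
      rw [sub_zero] at h0
      refine h0.congr' ?_
      filter_upwards [eventually_ge_atTop (1:ℝ)] with r hr
      have hr0 : r ≠ 0 := by linarith
      field_simp
    rw [ht.liminf_eq]
end

section
/- Let β ∈ ℝ, σ̄ > 0, L > 0, T > 0, and let A, B : [0,T] → ℝ be C¹ functions satisfying A'(t) = A(t)² − β and B'(t) = A(t) B(t) for all t ∈ [0,T]. Define h_L(r) := 2σ̄√L · tanh(√L r / (2σ̄)) and f_t(r) := A(t) r − B(t) h_L(B(t) r). Then for all (t,r) ∈ [0,T] × ℝ, ∂_t f_t(r) + 2σ̄² ∂²_{rr} f_t(r) = f_t(r) ∂_r f_t(r) − β r. -/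
open Real Set

/-- The hyperbolic tangent profile `h_L(r) = 2σ̄√L tanh(√L r/(2σ̄))`. -/
noncomputable def hLfun (σ L r : ℝ) : ℝ := 2 * σ * Real.sqrt L * Real.tanh (Real.sqrt L * r / (2 * σ))

/-- The linear-hyperbolic ansatz `f_t(r) = A(t) r - B(t) h_L(B(t) r)`. -/
noncomputable def linHypProfile (σ L : ℝ) (A B : ℝ → ℝ) (t r : ℝ) : ℝ :=
  A t * r - B t * hLfun σ L (B t * r)

lemma myHasDerivAt_tanh (x : ℝ) :
    HasDerivAt Real.tanh (1 - Real.tanh x ^ 2) x := by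
  have hc : Real.cosh x ≠ 0 := (Real.cosh_pos x).ne'
  have h := (Real.hasDerivAt_sinh x).div (Real.hasDerivAt_cosh x) hc
  have heq : (Real.cosh x * Real.cosh x - Real.sinh x * Real.sinh x) / Real.cosh x ^ 2
      = 1 - Real.tanh x ^ 2 := by
    rw [Real.tanh_eq_sinh_div_cosh]
    have h1 : Real.cosh x ^ 2 - Real.sinh x ^ 2 = 1 := Real.cosh_sq_sub_sinh_sq x
    field_simp
  rw [heq] at h
  have hfun : (Real.sinh / Real.cosh) = Real.tanh :=
    funext fun y => (Real.tanh_eq_sinh_div_cosh y).symm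
  rwa [hfun] at h

lemma hL_hasDerivAt (σ L : ℝ) (hσ : σ ≠ 0) (hL : 0 ≤ L) (x : ℝ) :
    HasDerivAt (hLfun σ L)
      (L * (1 - Real.tanh (Real.sqrt L * x / (2 * σ)) ^ 2)) x := by
  have h1 : HasDerivAt (fun y => Real.sqrt L * y / (2 * σ)) (Real.sqrt L / (2 * σ)) x := by
    simpa using ((hasDerivAt_id x).const_mul (Real.sqrt L)).div_const (2 * σ)
  have h2 := (myHasDerivAt_tanh (Real.sqrt L * x / (2 * σ))).comp x h1
  have h3 := h2.const_mul (2 * σ * Real.sqrt L)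
  have hs : Real.sqrt L * Real.sqrt L = L := Real.mul_self_sqrt hL
  refine h3.congr_deriv ?_
  field_simp
  linear_combination (1 - Real.tanh (Real.sqrt L * x / (2 * σ)) ^ 2) * hs

/-- if `A' = A² - β` and `B' = A·B` on `[0,T]`, then
`f_t(r) = A(t) r - B(t) h_L(B(t) r)` solves `∂_t f + 2σ̄² ∂²_rr f = f ∂_r f - β r`. -/
theorem stmt12 (β σ L T : ℝ) (hσ : 0 < σ) (hL : 0 < L) (hT : 0 < T)
    (A B : ℝ → ℝ)
    (hA : ∀ t ∈ Set.Icc (0 : ℝ) T, HasDerivAt A (A t ^ 2 - β) t)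
    (hB : ∀ t ∈ Set.Icc (0 : ℝ) T, HasDerivAt B (A t * B t) t) :
    ∀ t ∈ Set.Icc (0 : ℝ) T, ∀ r : ℝ,
      deriv (fun s => linHypProfile σ L A B s r) t
          + 2 * σ ^ 2 * deriv (deriv (fun ρ => linHypProfile σ L A B t ρ)) r
        = linHypProfile σ L A B t r * deriv (fun ρ => linHypProfile σ L A B t ρ) r - β * r := by
  intro t ht r
  have hσ' : σ ≠ 0 := hσ.ne'
  set s := Real.sqrt L with hsdef
  have hs : s * s = L := Real.mul_self_sqrt hL.le
  set a := A t
  set b := B t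
  -- time derivative
  have htime : HasDerivAt (fun u => linHypProfile σ L A B u r)
      ((a ^ 2 - β) * r - ((a * b) * hLfun σ L (b * r)
        + b * (L * (1 - Real.tanh (s * (b * r) / (2 * σ)) ^ 2) * (a * b * r)))) t := by
    have h1 : HasDerivAt (fun u => A u * r) ((a ^ 2 - β) * r) t := (hA t ht).mul_const r
    have hBr : HasDerivAt (fun u => B u * r) (a * b * r) t := (hB t ht).mul_const r
    have h2 : HasDerivAt (fun u => hLfun σ L (B u * r))
        (L * (1 - Real.tanh (s * (b * r) / (2 * σ)) ^ 2) * (a * b * r)) t :=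
      (hL_hasDerivAt σ L hσ' hL.le (b * r)).comp (h₂ := hLfun σ L) t hBr
    exact h1.sub ((hB t ht).mul h2)
  -- first space derivative as a function
  have hspace : ∀ ρ : ℝ, HasDerivAt (fun ρ => linHypProfile σ L A B t ρ)
      (a - b ^ 2 * (L * (1 - Real.tanh (s * (b * ρ) / (2 * σ)) ^ 2))) ρ := by
    intro ρ
    have h1 : HasDerivAt (fun ρ : ℝ => a * ρ) a ρ := by
      simpa using (hasDerivAt_id ρ).const_mul a
    have hbr : HasDerivAt (fun ρ : ℝ => b * ρ) b ρ := by
      simpa using (hasDerivAt_id ρ).const_mul b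
    have h2 : HasDerivAt (fun ρ => hLfun σ L (b * ρ))
        (L * (1 - Real.tanh (s * (b * ρ) / (2 * σ)) ^ 2) * b) ρ :=
      (hL_hasDerivAt σ L hσ' hL.le (b * ρ)).comp ρ hbr
    have := h1.sub (h2.const_mul b)
    refine this.congr_deriv ?_
    ring
  have hderiv1 : deriv (fun ρ => linHypProfile σ L A B t ρ)
      = fun ρ => a - b ^ 2 * (L * (1 - Real.tanh (s * (b * ρ) / (2 * σ)) ^ 2)) :=
    funext fun ρ => (hspace ρ).deriv
  -- second space derivative
  have hsecond : HasDerivAt (fun ρ => a - b ^ 2 * (L * (1 - Real.tanh (s * (b * ρ) / (2 * σ)) ^ 2)))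
      (b ^ 2 * L * (2 * Real.tanh (s * (b * r) / (2 * σ))
        * ((1 - Real.tanh (s * (b * r) / (2 * σ)) ^ 2) * (s * b / (2 * σ))))) r := by
    have hin : HasDerivAt (fun ρ : ℝ => s * (b * ρ) / (2 * σ)) (s * b / (2 * σ)) r := by
      have : HasDerivAt (fun ρ : ℝ => s * b * ρ) (s * b) r := by
        simpa using (hasDerivAt_id r).const_mul (s * b)
      have h := this.div_const (2 * σ)
      convert h using 2 with ρ
      · rfl
      · rfl
      · ring
    have hth : HasDerivAt (fun ρ => Real.tanh (s * (b * ρ) / (2 * σ)))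
        ((1 - Real.tanh (s * (b * r) / (2 * σ)) ^ 2) * (s * b / (2 * σ))) r :=
      (myHasDerivAt_tanh _).comp r hin
    have hth2 : HasDerivAt (fun ρ => Real.tanh (s * (b * ρ) / (2 * σ)) ^ 2)
        (2 * Real.tanh (s * (b * r) / (2 * σ))
          * ((1 - Real.tanh (s * (b * r) / (2 * σ)) ^ 2) * (s * b / (2 * σ)))) r := by
      have := hth.pow 2
      refine this.congr_deriv ?_
      ring
    have h1 : HasDerivAt (fun ρ => 1 - Real.tanh (s * (b * ρ) / (2 * σ)) ^ 2)
        (-(2 * Real.tanh (s * (b * r) / (2 * σ))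
          * ((1 - Real.tanh (s * (b * r) / (2 * σ)) ^ 2) * (s * b / (2 * σ))))) r := by
      exact ((hasDerivAt_const r (1 : ℝ)).sub hth2).congr_deriv (by ring)
    have := ((h1.const_mul L).const_mul (b ^ 2))
    have h2 := (hasDerivAt_const r a).sub this
    refine h2.congr_deriv ?_
    ring
  rw [htime.deriv, hderiv1, hsecond.deriv]
  simp only [hderiv1]
  rw [linHypProfile, hLfun]
  set th := Real.tanh (s * (b * r) / (2 * σ))
  field_simp
  nlinarith [hs, sq_nonneg th, sq_nonneg (s*b)]
end

section
/- Let a, b > 0 and set τ := min{2b/a, 2a^{1/2}/b, 2a^{3/2}/b}, α_τ := 2 a^{-1/2} b τ^{-2}, β_τ := a^{1/2} − 2 a^{-1/2} b τ^{-1}, and p(r) := ½ α_τ r² + β_τ r. Then for every r ∈ [0, τ]: 2 p''(r) − p(r) p'(r) + a r − b ≥ 0. -/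
open Real Set

lemma aux (s c t r : ℝ) (hs : 0 ≤ s) (hc : 0 ≤ c) (ht : 0 < t)
    (h1 : s*t ≤ 2*c) (h2 : c*t ≤ 2) (hr0 : 0 ≤ r) (hrt : r ≤ t) :
    0 ≤ 4*t^2 - s*t^2*(t-r)*(t-3*r) - 2*c*r*(t-r)*(2*t-r) := by
  have hu1 : 0 ≤ 2*c - s*t := by linarith
  have hu2 : 0 ≤ 2 - c*t := by linarith
  have hu1t : (2*c - s*t)*t ≤ 4 := by nlinarith [mul_nonneg (mul_nonneg hs ht.le) ht.le]
  have key : 0 ≤ t * (4*t^2 - s*t^2*(t-r)*(t-3*r) - 2*c*r*(t-r)*(2*t-r)) := by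
    have hid : t * (4*t^2 - s*t^2*(t-r)*(t-3*r) - 2*c*r*(t-r)*(2*t-r))
        = 4*r*(2*t^2 - r^2) + 2*(2 - c*t)*(t-r)*(t^2 - r*t - r^2)
          + (2*c - s*t)*t^2*(t-r)*(t-3*r) := by ring
    rw [hid]
    rcases le_or_gt (3*r) t with h3 | h3
    · have hq : 0 ≤ t^2 - r*t - r^2 := by nlinarith
      have := mul_nonneg (mul_nonneg (mul_nonneg hu1 (sq_nonneg t)) (sub_nonneg.2 hrt)) (by linarith : (0:ℝ) ≤ t - 3*r)
      have := mul_nonneg (mul_nonneg hu2 (sub_nonneg.2 hrt)) hq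
      nlinarith [mul_nonneg hr0 (by nlinarith : (0:ℝ) ≤ 2*t^2 - r^2)]
    · rcases le_or_gt (t^2) (r*t + r^2) with hq | hq
      · nlinarith [mul_nonneg (by linarith : (0:ℝ) ≤ 4 - (2*c - s*t)*t)
            (mul_nonneg ht.le (mul_nonneg (sub_nonneg.2 hrt) (by linarith : (0:ℝ) ≤ 3*r - t))),
          mul_nonneg (mul_nonneg hc ht.le) (mul_nonneg (sub_nonneg.2 hrt) (by linarith : (0:ℝ) ≤ r*t + r^2 - t^2)),
          mul_nonneg (sub_nonneg.2 hrt) (sq_nonneg (t - r)),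
          mul_nonneg (sub_nonneg.2 hrt) (sq_nonneg t)]
      · nlinarith [mul_nonneg (by linarith : (0:ℝ) ≤ 4 - (2*c - s*t)*t)
            (mul_nonneg ht.le (mul_nonneg (sub_nonneg.2 hrt) (by linarith : (0:ℝ) ≤ 3*r - t))),
          mul_nonneg (mul_nonneg hu2 (sub_nonneg.2 hrt)) (by linarith : (0:ℝ) ≤ t^2 - r*t - r^2),
          mul_nonneg (sub_nonneg.2 hrt) (sq_nonneg (t - r)),
          mul_nonneg (sub_nonneg.2 hrt) (sq_nonneg t),
          mul_nonneg hr0 (sub_nonneg.2 hrt), mul_nonneg (mul_nonneg hr0 hr0) hr0]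
  nlinarith [key, ht]

/-- the parabola `p(r) = ½ α_τ r² + β_τ r` tangent to the linear profile at
`τ = min{2b/a, 2a^{1/2}/b, 2a^{3/2}/b}` satisfies `2p'' - p p' + a r - b ≥ 0` on `[0, τ]`. -/
theorem stmt14 (a b : ℝ) (ha : 0 < a) (hb : 0 < b)
    (τ ατ βτ : ℝ)
    (hτ : τ = min (2 * b / a) (min (2 * Real.sqrt a / b) (2 * (a * Real.sqrt a) / b)))
    (hατ : ατ = 2 * (b / Real.sqrt a) * τ⁻¹ ^ 2)
    (hβτ : βτ = Real.sqrt a - 2 * (b / Real.sqrt a) * τ⁻¹)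
    (p : ℝ → ℝ) (hp : p = fun r : ℝ => ατ / 2 * r ^ 2 + βτ * r) :
    ∀ r ∈ Set.Icc (0 : ℝ) τ, 2 * deriv (deriv p) r - p r * deriv p r + a * r - b ≥ 0 := by
  have hs0 : 0 < Real.sqrt a := Real.sqrt_pos.2 ha
  set s := Real.sqrt a with hsdef
  have hs2 : s * s = a := Real.mul_self_sqrt ha.le
  have hτ0 : 0 < τ := by
    rw [hτ]
    exact lt_min (by positivity) (lt_min (by positivity) (by positivity))
  have hτa : a * τ ≤ 2 * b := by
    have h := min_le_left (2 * b / a) (min (2 * s / b) (2 * (a * s) / b))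
    rw [← hτ] at h
    calc a * τ = τ * a := by ring
    _ ≤ 2 * b := (le_div_iff₀ ha).1 h
  have hτb : b * τ ≤ 2 * s := by
    have h := le_trans (min_le_right (2 * b / a) _) (min_le_left (2 * s / b) (2 * (a * s) / b))
    rw [← hτ] at h
    calc b * τ = τ * b := by ring
    _ ≤ 2 * s := (le_div_iff₀ hb).1 h
  set c := b / s with hcdef
  have hc0 : 0 < c := by positivity
  have hcb : b = c * s := by rw [hcdef]; field_simp
  have h1 : s * τ ≤ 2 * c := by nlinarith
  have h2 : c * τ ≤ 2 := by nlinarith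
  -- derivatives
  have hd1 : deriv p = fun r : ℝ => ατ * r + βτ := by
    funext x
    rw [hp]
    have h : HasDerivAt (fun r : ℝ => ατ / 2 * r ^ 2 + βτ * r) (ατ / 2 * (2 * x ^ 1) + βτ * 1) x := by
      exact ((hasDerivAt_pow 2 x).const_mul (ατ / 2)).add ((hasDerivAt_id x).const_mul βτ)
    rw [h.deriv]; ring
  have hd2 : deriv (deriv p) = fun _ : ℝ => ατ := by
    rw [hd1]
    funext x
    have h : HasDerivAt (fun r : ℝ => ατ * r + βτ) ατ x := by
      simpa using ((hasDerivAt_id x).const_mul ατ).add_const βτ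
    rw [h.deriv]
  intro r hr
  obtain ⟨hr0, hrτ⟩ := hr
  rw [hd2, hd1, hp]
  simp only
  have hG := aux s c τ r hs0.le hc0.le hτ0 h1 h2 hr0 hrτ
  have hτne : τ ≠ 0 := ne_of_gt hτ0
  have hE : (2 * ατ - (ατ / 2 * r ^ 2 + βτ * r) * (ατ * r + βτ) + a * r - b) * τ ^ 4
      = c * (4*τ^2 - s*τ^2*(τ-r)*(τ-3*r) - 2*c*r*(τ-r)*(2*τ-r)) := by
    rw [hατ, hβτ, ← hs2, hcb]
    field_simp
    ring
  have hτ4 : 0 < τ ^ 4 := by positivity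
  nlinarith [mul_nonneg hc0.le hG, hE, hτ4]
end
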